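/- arXiv:2311.00224 — 4 statements merged into one kernel-verified Lean document; each statement's English description precedes it below -/
import Mathlib

section
/- Let 0 < γ₂ < γ₁ < 1 and ν > 0. Any solution w of -ν w'' + w' = 0 on (0,γ₁) with w(0) = 0 satisfies |w(γ₂)| ≤ ρ₁ |w(γ₁)| where ρ₁ = (e^{γ₂/ν} - 1)/(e^{γ₁/ν} - 1) < 1. -/
open Real Set

theorem schwarz_contraction_left (ν γ₁ γ₂ : ℝ) (hν : 0 < ν)
    (h0 : 0 < γ₂) (h21 : γ₂ < γ₁) (h1 : γ₁ < 1)
    (w : ℝ → ℝ) (hw : ContDiff ℝ 2 w)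
    (heq : ∀ x ∈ Ioo (0 : ℝ) γ₁, -ν * deriv (deriv w) x + deriv w x = 0)
    (hw0 : w 0 = 0) :
    |w γ₂| ≤ (exp (γ₂ / ν) - 1) / (exp (γ₁ / ν) - 1) * |w γ₁| ∧
      (exp (γ₂ / ν) - 1) / (exp (γ₁ / ν) - 1) < 1 := by
  have hν' : ν ≠ 0 := ne_of_gt hν
  have h01 : (0:ℝ) < γ₁ := h0.trans h21
  have hw2 : ContDiff ℝ ((1:ℕ∞)+1) w := by exact_mod_cast hw
  have hdw : Differentiable ℝ w := hw.differentiable (by norm_num)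
  have hu : ContDiff ℝ 1 (deriv w) := (contDiff_succ_iff_deriv.mp hw2).2.2
  have hdu : Differentiable ℝ (deriv w) := hu.differentiable (by norm_num)
  set u := deriv w with hu_def
  have hucont : Continuous u := hdu.continuous
  have heq' : ∀ x ∈ Ioo (0:ℝ) γ₁, deriv u x = u x / ν := by
    intro x hx
    have h := heq x hx
    field_simp
    linarith
  -- derivative of exp(-(x/ν))
  have hexp' : ∀ x : ℝ, HasDerivAt (fun y => exp (-(y/ν))) (exp (-(x/ν)) * (-(1/ν))) x := by
    intro x
    have h1 : HasDerivAt (fun y : ℝ => -(y/ν)) (-(1/ν)) x := ((hasDerivAt_id x).div_const ν).neg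
    exact h1.exp
  set g : ℝ → ℝ := fun x => u x * exp (-(x/ν)) with hg_def
  have hg' : ∀ x : ℝ, HasDerivAt g (deriv u x * exp (-(x/ν)) + u x * (exp (-(x/ν)) * (-(1/ν)))) x := by
    intro x
    exact ((hdu x).hasDerivAt).mul (hexp' x)
  have hg0 : ∀ x ∈ Ioo (0:ℝ) γ₁, HasDerivAt g 0 x := by
    intro x hx
    have h := hg' x
    rw [heq' x hx] at h
    convert h using 1
    field_simp
    ring
  have hgcont : Continuous g := hucont.mul (Real.continuous_exp.comp (continuous_id.div_const ν).neg)
  -- g constant on Ioo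
  have hconst : ∀ a b : ℝ, 0 < a → a ≤ b → b < γ₁ → g b = g a := by
    intro a b ha hab hb
    exact constant_of_has_deriv_right_zero (hgcont.continuousOn)
      (fun x hx => (hg0 x ⟨ha.trans_le hx.1, hx.2.trans hb⟩).hasDerivWithinAt) b ⟨hab, le_rfl⟩
  set c := g γ₂ with hc_def
  have hEqOn : EqOn g (fun _ => c) (Ioo 0 γ₁) := by
    intro x hx
    rcases le_total x γ₂ with h | h
    · exact (hconst x γ₂ hx.1 h h21).symm
    · exact hconst γ₂ x h0 h hx.2
  have hEqOnIcc : EqOn g (fun _ => c) (Icc 0 γ₁) := by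
    have := hEqOn.closure hgcont continuous_const
    rwa [closure_Ioo (ne_of_lt h01)] at this
  have hU : ∀ x ∈ Icc (0:ℝ) γ₁, u x = c * exp (x/ν) := by
    intro x hx
    have hgx : u x * exp (-(x/ν)) = c := hEqOnIcc hx
    rw [Real.exp_neg] at hgx
    field_simp at hgx
    linarith [hgx]
  -- φ = w - cν exp(x/ν) has zero derivative on Icc
  set φ : ℝ → ℝ := fun x => w x - c * ν * exp (x/ν) with hφ_def
  have hφ' : ∀ x ∈ Icc (0:ℝ) γ₁, HasDerivAt φ 0 x := by
    intro x hx
    have hwx : HasDerivAt w (u x) x := (hdw x).hasDerivAt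
    have he : HasDerivAt (fun y => exp (y/ν)) (exp (x/ν) * (1/ν)) x := by
      exact ((hasDerivAt_id x).div_const ν).exp
    have h2 : HasDerivAt (fun y => c * ν * exp (y/ν)) (c * ν * (exp (x/ν) * (1/ν))) x :=
      he.const_mul _
    have h3 := hwx.sub h2
    refine h3.congr_deriv ?_
    rw [hU x hx]
    field_simp
    ring
  have hφconst : ∀ x ∈ Icc (0:ℝ) γ₁, φ x = φ 0 :=
    constant_of_has_deriv_right_zero
      ((hdw.continuous.sub (continuous_const.mul (Real.continuous_exp.comp (continuous_id.div_const ν)))).continuousOn)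
      (fun x hx => (hφ' x ⟨hx.1, le_of_lt hx.2⟩).hasDerivWithinAt)
  have hwform : ∀ x ∈ Icc (0:ℝ) γ₁, w x = c * ν * (exp (x/ν) - 1) := by
    intro x hx
    have h := hφconst x hx
    simp only [hφ_def, hw0, zero_div, Real.exp_zero] at h
    linear_combination h
  have hw2v : w γ₂ = c * ν * (exp (γ₂/ν) - 1) := hwform γ₂ ⟨le_of_lt h0, le_of_lt h21⟩
  have hw1v : w γ₁ = c * ν * (exp (γ₁/ν) - 1) := hwform γ₁ ⟨le_of_lt h01, le_rfl⟩
  have hE2 : 1 < exp (γ₂/ν) := Real.one_lt_exp_iff.mpr (div_pos h0 hν)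
  have hE12 : exp (γ₂/ν) < exp (γ₁/ν) := Real.exp_lt_exp.mpr (by gcongr)
  have hE1 : 1 < exp (γ₁/ν) := hE2.trans hE12
  have habs2 : |w γ₂| = |c * ν| * (exp (γ₂/ν) - 1) := by
    rw [hw2v, abs_mul, abs_of_pos (sub_pos.mpr hE2)]
  have habs1 : |w γ₁| = |c * ν| * (exp (γ₁/ν) - 1) := by
    rw [hw1v, abs_mul, abs_of_pos (sub_pos.mpr hE1)]
  constructor
  · rw [habs1, habs2]
    rw [div_mul_eq_mul_div, le_div_iff₀ (by linarith)]
    ring_nf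
    rfl
  · rw [div_lt_one (by linarith)]
    linarith
end

section
/- Convergence of the Schwarz alternating method in 1D: with ν > 0, 0 < γ₂ < γ₁ < 1, define the Schwarz iterates u₁^{(n)} on (0,γ₁) and u₂^{(n)} on (γ₂,1) by solving -ν u'' + u' = 1 with u₁^{(n+1)}(0)=0, u₁^{(n+1)}(γ₁)=u₂^{(n)}(γ₁), u₂^{(n+1)}(1)=0, u₂^{(n+1)}(γ₂)=u₁^{(n+1)}(γ₂), starting from u₂^{(0)}(γ₁)=0. Then the errors e_i^{(n)} = u_i^{(n)} - u|_{Ω_i} satisfy sup|e_i^{(n)}| ≤ (ρ₁ρ₂)^{n-1} C for a constant C, where ρ₁ρ₂ < 1; hence u_i^{(n)} converges uniformly to the exact solution u on each subdomain. -/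
open Real Set Filter Topology

lemma my_deriv_contDiff {f : ℝ → ℝ} (hf : ContDiff ℝ 2 f) : ContDiff ℝ 1 (deriv f) := by
  have h : ContDiff ℝ ((1 : ℕ) + 1) f := by exact_mod_cast hf
  exact (contDiff_succ_iff_deriv.1 h).2.2

lemma ode_rep (ν a b : ℝ) (hν : 0 < ν) (hab : a < b) (f : ℝ → ℝ) (hf : ContDiff ℝ 2 f)
    (heq : ∀ x ∈ Ioo a b, -ν * deriv (deriv f) x + deriv f x = 0) :
    ∀ x ∈ Icc a b,
      f x = f a + (f b - f a) * ((exp (x / ν) - exp (a / ν)) / (exp (b / ν) - exp (a / ν))) := by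
  have hfd : Differentiable ℝ f := hf.differentiable (by norm_num)
  have hg1 : ContDiff ℝ 1 (deriv f) := my_deriv_contDiff hf
  have hgd : Differentiable ℝ (deriv f) := hg1.differentiable (by norm_num)
  have hg'c : Continuous (deriv (deriv f)) := (contDiff_one_iff_deriv.1 hg1).2
  -- extend the equation to the closed interval
  have heqc : ∀ x ∈ Icc a b, -ν * deriv (deriv f) x + deriv f x = 0 := by
    have hE : Set.EqOn (fun x => -ν * deriv (deriv f) x + deriv f x) (fun _ => 0) (Ioo a b) :=
      fun x hx => heq x hx
    have := hE.closure ((continuous_const.mul hg'c).add hg1.continuous) continuous_const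
    rw [closure_Ioo hab.ne] at this
    exact fun x hx => this hx
  have hνne : ν ≠ 0 := hν.ne'
  -- h x = exp(-(x/ν)) * deriv f x has zero derivative on the interval
  set h : ℝ → ℝ := fun x => exp (-(x / ν)) * deriv f x with hh
  have hder : ∀ x ∈ Icc a b, HasDerivAt h 0 x := by
    intro x hx
    have hE : HasDerivAt (fun y => exp (-(y / ν))) (exp (-(x / ν)) * (-(1 / ν))) x :=
      (((hasDerivAt_id x).div_const ν).neg).exp
    have hG : HasDerivAt (deriv f) (deriv (deriv f) x) x := (hgd x).hasDerivAt
    have := hE.fun_mul hG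
    have hd2 : deriv (deriv f) x = deriv f x / ν := by
      rw [eq_div_iff hνne]; linarith [heqc x hx]
    refine this.congr_deriv (Eq.symm ?_)
    rw [hd2]; field_simp; ring
  have hconst : ∀ x ∈ Icc a b, h x = h a :=
    constant_of_has_deriv_right_zero
      (fun x hx => ((hder x hx).continuousAt).continuousWithinAt)
      (fun x hx => ((hder x (Ico_subset_Icc_self hx)).hasDerivWithinAt))
  have hgval : ∀ x ∈ Icc a b, deriv f x = h a * exp (x / ν) := by
    intro x hx
    have hc : exp (-(x / ν)) * deriv f x = h a := hconst x hx
    have h2 : exp (x / ν) * (exp (-(x / ν)) * deriv f x) = exp (x / ν) * h a := by rw [hc]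
    have hx0 : exp (x / ν) * exp (-(x / ν)) = 1 := by rw [← exp_add]; simp
    rwa [← mul_assoc, hx0, one_mul, mul_comm] at h2
  -- F x = f x - (h a * ν) * exp (x/ν) is constant
  set F : ℝ → ℝ := fun x => f x - h a * ν * exp (x / ν) with hF
  have hFder : ∀ x ∈ Icc a b, HasDerivAt F 0 x := by
    intro x hx
    have hE : HasDerivAt (fun y => exp (y / ν)) (exp (x / ν) * (1 / ν)) x :=
      ((hasDerivAt_id x).div_const ν).exp
    have := (hfd x).hasDerivAt.fun_sub ((hE.const_mul (h a * ν)))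
    refine this.congr_deriv (Eq.symm ?_)
    rw [hgval x hx]; field_simp; ring
  have hFconst : ∀ x ∈ Icc a b, F x = F a :=
    constant_of_has_deriv_right_zero
      (fun x hx => ((hFder x hx).continuousAt).continuousWithinAt)
      (fun x hx => ((hFder x (Ico_subset_Icc_self hx)).hasDerivWithinAt))
  have key : ∀ x ∈ Icc a b, f x = f a + h a * ν * (exp (x / ν) - exp (a / ν)) := by
    intro x hx
    have := hFconst x hx
    simp only [hF] at this
    linarith [this]
  intro x hx
  have hb := key b ⟨hab.le, le_rfl⟩
  have hx' := key x hx
  have hdne : exp (b / ν) - exp (a / ν) ≠ 0 := by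
    have hlt : exp (a / ν) < exp (b / ν) := exp_lt_exp.2 (by gcongr)
    exact sub_ne_zero.2 hlt.ne'
  rw [hx', hb]
  field_simp
  ring

lemma sub_ode (ν : ℝ) (f g : ℝ → ℝ) (hf : ContDiff ℝ 2 f) (hg : ContDiff ℝ 2 g)
    (s : Set ℝ) (hfe : ∀ x ∈ s, -ν * deriv (deriv f) x + deriv f x = 1)
    (hge : ∀ x ∈ s, -ν * deriv (deriv g) x + deriv g x = 1) :
    ∀ x ∈ s, -ν * deriv (deriv (fun y => f y - g y)) x
      + deriv (fun y => f y - g y) x = 0 := by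
  have hfd : Differentiable ℝ f := hf.differentiable (by norm_num)
  have hgd : Differentiable ℝ g := hg.differentiable (by norm_num)
  have hfd' : Differentiable ℝ (deriv f) := (my_deriv_contDiff hf).differentiable (by norm_num)
  have hgd' : Differentiable ℝ (deriv g) := (my_deriv_contDiff hg).differentiable (by norm_num)
  have hd1 : deriv (fun y => f y - g y) = fun y => deriv f y - deriv g y :=
    funext fun y => deriv_fun_sub (hfd y) (hgd y)
  intro x hx
  have hd2 : deriv (deriv (fun y => f y - g y)) x = deriv (deriv f) x - deriv (deriv g) x := by
    rw [hd1]
    exact deriv_fun_sub (hfd' x) (hgd' x)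
  rw [hd2, hd1]
  have := hfe x hx
  have := hge x hx
  ring_nf
  ring_nf at this ⊢
  linarith [hfe x hx, hge x hx]

theorem schwarz_alternating_convergence (ν γ₁ γ₂ : ℝ) (hν : 0 < ν)
    (h0 : 0 < γ₂) (h21 : γ₂ < γ₁) (h1 : γ₁ < 1)
    (u : ℝ → ℝ) (hu : ContDiff ℝ 2 u)
    (hueq : ∀ x ∈ Ioo (0 : ℝ) 1, -ν * deriv (deriv u) x + deriv u x = 1)
    (hu0 : u 0 = 0) (hu1 : u 1 = 0)
    (u₁ u₂ : ℕ → ℝ → ℝ)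
    (hu₁smooth : ∀ n, ContDiff ℝ 2 (u₁ n)) (hu₂smooth : ∀ n, ContDiff ℝ 2 (u₂ n))
    (hu₁eq : ∀ n, ∀ x ∈ Ioo (0 : ℝ) γ₁,
      -ν * deriv (deriv (u₁ (n + 1))) x + deriv (u₁ (n + 1)) x = 1)
    (hu₂eq : ∀ n, ∀ x ∈ Ioo γ₂ (1 : ℝ),
      -ν * deriv (deriv (u₂ (n + 1))) x + deriv (u₂ (n + 1)) x = 1)
    (hbc₁0 : ∀ n, u₁ (n + 1) 0 = 0)
    (hbc₁γ : ∀ n, u₁ (n + 1) γ₁ = u₂ n γ₁)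
    (hbc₂1 : ∀ n, u₂ (n + 1) 1 = 0)
    (hbc₂γ : ∀ n, u₂ (n + 1) γ₂ = u₁ (n + 1) γ₂)
    (hinit : u₂ 0 γ₁ = 0) :
    (exp (γ₂ / ν) - 1) / (exp (γ₁ / ν) - 1) *
        ((exp (1 / ν) - exp (γ₁ / ν)) / (exp (1 / ν) - exp (γ₂ / ν))) < 1 ∧
    ∃ C : ℝ,
      (∀ n : ℕ, 1 ≤ n → ∀ x ∈ Icc (0 : ℝ) γ₁,
        |u₁ n x - u x| ≤
          ((exp (γ₂ / ν) - 1) / (exp (γ₁ / ν) - 1) *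
            ((exp (1 / ν) - exp (γ₁ / ν)) / (exp (1 / ν) - exp (γ₂ / ν)))) ^ (n - 1) * C) ∧
      (∀ n : ℕ, 1 ≤ n → ∀ x ∈ Icc γ₂ (1 : ℝ),
        |u₂ n x - u x| ≤
          ((exp (γ₂ / ν) - 1) / (exp (γ₁ / ν) - 1) *
            ((exp (1 / ν) - exp (γ₁ / ν)) / (exp (1 / ν) - exp (γ₂ / ν)))) ^ (n - 1) * C) ∧
      TendstoUniformlyOn (fun n => u₁ n) u atTop (Icc (0 : ℝ) γ₁) ∧
      TendstoUniformlyOn (fun n => u₂ n) u atTop (Icc γ₂ (1 : ℝ)) := by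
  set ρ₁ : ℝ := (exp (γ₂ / ν) - 1) / (exp (γ₁ / ν) - 1) with hρ₁def
  set ρ₂ : ℝ := (exp (1 / ν) - exp (γ₁ / ν)) / (exp (1 / ν) - exp (γ₂ / ν)) with hρ₂def
  -- exponential inequalities
  have e0 : (1 : ℝ) < exp (γ₂ / ν) := by
    rw [← exp_zero]; exact exp_lt_exp.2 (by positivity)
  have e21 : exp (γ₂ / ν) < exp (γ₁ / ν) := exp_lt_exp.2 (by gcongr)
  have e11 : exp (γ₁ / ν) < exp (1 / ν) := exp_lt_exp.2 (by gcongr)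
  have hρ₁pos : 0 < ρ₁ := div_pos (by linarith) (by linarith)
  have hρ₁lt : ρ₁ < 1 := (div_lt_one (by linarith)).2 (by linarith)
  have hρ₂pos : 0 < ρ₂ := div_pos (by linarith) (by linarith)
  have hρ₂lt : ρ₂ < 1 := (div_lt_one (by linarith)).2 (by linarith)
  have hρpos : 0 ≤ ρ₁ * ρ₂ := by positivity
  have hρlt : ρ₁ * ρ₂ < 1 := by nlinarith
  -- representations of the errors
  have rep₁ : ∀ n, ∀ x ∈ Icc (0 : ℝ) γ₁,
      u₁ (n + 1) x - u x = (u₂ n γ₁ - u γ₁) * ((exp (x / ν) - 1) / (exp (γ₁ / ν) - 1)) := by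
    intro n x hx
    have hode := sub_ode ν (u₁ (n + 1)) u (hu₁smooth (n + 1)) hu (Ioo 0 γ₁)
      (hu₁eq n) (fun y hy => hueq y (Ioo_subset_Ioo le_rfl h1.le hy))
    have := ode_rep ν 0 γ₁ hν (h0.trans h21) (fun y => u₁ (n + 1) y - u y)
      ((hu₁smooth (n + 1)).sub hu) hode x hx
    simp only [hbc₁0 n, hu0, hbc₁γ n, zero_div, exp_zero, sub_zero, zero_add] at this
    exact this
  have rep₂ : ∀ n, ∀ x ∈ Icc γ₂ (1 : ℝ),
      u₂ (n + 1) x - u x = (u₁ (n + 1) γ₂ - u γ₂) *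
        ((exp (1 / ν) - exp (x / ν)) / (exp (1 / ν) - exp (γ₂ / ν))) := by
    intro n x hx
    have hode := sub_ode ν (u₂ (n + 1)) u (hu₂smooth (n + 1)) hu (Ioo γ₂ 1)
      (hu₂eq n) (fun y hy => hueq y (Ioo_subset_Ioo h0.le le_rfl hy))
    have := ode_rep ν γ₂ 1 hν (h21.trans h1) (fun y => u₂ (n + 1) y - u y)
      ((hu₂smooth (n + 1)).sub hu) hode x hx
    simp only [hbc₂1 n, hu1, hbc₂γ n, sub_zero, zero_sub] at this
    rw [this]
    have hne : exp (1 / ν) - exp (γ₂ / ν) ≠ 0 := by linarith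
    field_simp
    ring
  -- the interface sequence
  set a : ℕ → ℝ := fun n => u₂ n γ₁ - u γ₁ with hadef
  have hstep : ∀ n, a (n + 1) = ρ₁ * ρ₂ * a n := by
    intro n
    have h2 := rep₂ n γ₁ ⟨h21.le, h1.le⟩
    have h1' := rep₁ n γ₂ ⟨h0.le, h21.le⟩
    simp only [hadef]
    rw [h2, h1']
    ring
  have han : ∀ n, a n = (ρ₁ * ρ₂) ^ n * a 0 := by
    intro n
    induction n with
    | zero => simp
    | succ k ih => rw [hstep k, ih, pow_succ]; ring
  have habs : ∀ n, |a n| = (ρ₁ * ρ₂) ^ n * |u γ₁| := by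
    intro n
    rw [han n, abs_mul, abs_pow, abs_of_nonneg hρpos]
    have : a 0 = -u γ₁ := by simp [hadef, hinit]
    rw [this, abs_neg]
  -- pointwise bounds
  have bound₁ : ∀ n, ∀ x ∈ Icc (0 : ℝ) γ₁,
      |u₁ (n + 1) x - u x| ≤ (ρ₁ * ρ₂) ^ n * |u γ₁| := by
    intro n x hx
    rw [rep₁ n x hx, abs_mul]
    have hφ : |(exp (x / ν) - 1) / (exp (γ₁ / ν) - 1)| ≤ 1 := by
      rw [abs_of_nonneg (div_nonneg (by
        have : (1:ℝ) ≤ exp (x / ν) := by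
          rw [← exp_zero]; exact exp_le_exp.2 (div_nonneg hx.1 hν.le)
        linarith) (by linarith))]
      rw [div_le_one (by linarith)]
      have : exp (x / ν) ≤ exp (γ₁ / ν) := exp_le_exp.2 (by gcongr; exact hx.2)
      linarith
    calc |u₂ n γ₁ - u γ₁| * |(exp (x / ν) - 1) / (exp (γ₁ / ν) - 1)|
        ≤ |u₂ n γ₁ - u γ₁| * 1 := by gcongr
      _ = |a n| := by rw [mul_one]
      _ = (ρ₁ * ρ₂) ^ n * |u γ₁| := habs n
  have bound₂ : ∀ n, ∀ x ∈ Icc γ₂ (1 : ℝ),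
      |u₂ (n + 1) x - u x| ≤ (ρ₁ * ρ₂) ^ n * |u γ₁| := by
    intro n x hx
    rw [rep₂ n x hx, abs_mul]
    have hφ : |(exp (1 / ν) - exp (x / ν)) / (exp (1 / ν) - exp (γ₂ / ν))| ≤ 1 := by
      have hx2 : exp (γ₂ / ν) ≤ exp (x / ν) := exp_le_exp.2 (by gcongr; exact hx.1)
      have hx1 : exp (x / ν) ≤ exp (1 / ν) := exp_le_exp.2 (by gcongr; exact hx.2)
      rw [abs_of_nonneg (div_nonneg (by linarith) (by linarith))]
      rw [div_le_one (by linarith)]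
      linarith
    have h1' := rep₁ n γ₂ ⟨h0.le, h21.le⟩
    have hfac : |u₁ (n + 1) γ₂ - u γ₂| ≤ |a n| := by
      rw [h1', abs_mul]
      have : |(exp (γ₂ / ν) - 1) / (exp (γ₁ / ν) - 1)| = ρ₁ := abs_of_nonneg hρ₁pos.le
      rw [this]
      calc |a n| * ρ₁ ≤ |a n| * 1 := mul_le_mul_of_nonneg_left hρ₁lt.le (abs_nonneg _)
        _ = |a n| := mul_one _
    calc |u₁ (n + 1) γ₂ - u γ₂| * |(exp (1 / ν) - exp (x / ν)) / (exp (1 / ν) - exp (γ₂ / ν))|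
        ≤ |a n| * 1 := by gcongr
      _ = (ρ₁ * ρ₂) ^ n * |u γ₁| := by rw [mul_one]; exact habs n
  refine ⟨hρlt, |u γ₁|, ?_, ?_, ?_, ?_⟩
  · intro n hn x hx
    obtain ⟨m, rfl⟩ : ∃ m, n = m + 1 := ⟨n - 1, by omega⟩
    simpa using bound₁ m x hx
  · intro n hn x hx
    obtain ⟨m, rfl⟩ : ∃ m, n = m + 1 := ⟨n - 1, by omega⟩
    simpa using bound₂ m x hx
  all_goals {
    rw [Metric.tendstoUniformlyOn_iff]
    intro ε hε
    have htend : Tendsto (fun n : ℕ => (ρ₁ * ρ₂) ^ (n - 1) * |u γ₁|) atTop (𝓝 0) := by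
      have h := (tendsto_pow_atTop_nhds_zero_of_lt_one hρpos hρlt).mul_const |u γ₁|
      rw [zero_mul] at h
      exact h.comp (tendsto_sub_atTop_nat 1)
    filter_upwards [htend.eventually (gt_mem_nhds hε), eventually_ge_atTop 1] with n hn hn1 x hx
    obtain ⟨m, rfl⟩ : ∃ m, n = m + 1 := ⟨n - 1, by omega⟩
    rw [Real.dist_eq, abs_sub_comm]
    calc |_ - u x| ≤ (ρ₁ * ρ₂) ^ m * |u γ₁| := by
          first
            | exact bound₁ m x hx
            | exact bound₂ m x hx
      _ < ε := by simpa using hn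
  }
end

section
/- The Schwarz contraction factor ρ₁ρ₂ = [(e^{γ₂/ν}-1)(e^{1/ν}-e^{γ₁/ν})] / [(e^{γ₁/ν}-1)(e^{1/ν}-e^{γ₂/ν})] is strictly less than 1 if and only if γ₂ < γ₁ (i.e., the overlap is nonempty), for any ν > 0. -/
open Real Set

theorem schwarz_contraction_lt_one_iff_overlap (ν γ₁ γ₂ : ℝ) (hν : 0 < ν)
    (h0 : 0 < γ₂) (h21 : γ₂ ≤ γ₁) (h1 : γ₁ < 1) :
    (exp (γ₂ / ν) - 1) * (exp (1 / ν) - exp (γ₁ / ν)) /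
        ((exp (γ₁ / ν) - 1) * (exp (1 / ν) - exp (γ₂ / ν))) < 1 ↔ γ₂ < γ₁ := by
  set a := exp (γ₂ / ν) with hA
  set b := exp (γ₁ / ν) with hB
  set E := exp (1 / ν) with hE
  have ha : 1 < a := by
    rw [hA, show (1:ℝ) = exp 0 by simp]
    exact exp_lt_exp.mpr (by positivity)
  have hab : a ≤ b := exp_le_exp.mpr (by gcongr <;> linarith)
  have hbE : b < E := exp_lt_exp.mpr (by gcongr <;> linarith)
  have hden : 0 < (b - 1) * (E - a) := by nlinarith
  rw [div_lt_one hden]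
  constructor
  · intro h
    by_contra hge
    push_neg at hge
    have heq : a = b := by rw [hA, hB, le_antisymm h21 hge]
    nlinarith
  · intro h
    have hlt : a < b := exp_lt_exp.mpr (by gcongr <;> linarith)
    nlinarith
end

section
/- Monotonicity of the contraction factor in the overlap: fix ν > 0 and γ₂ ∈ (0,1); then the product ρ(γ₁) = [(e^{γ₂/ν}-1)(e^{1/ν}-e^{γ₁/ν})]/[(e^{γ₁/ν}-1)(e^{1/ν}-e^{γ₂/ν})] is strictly decreasing in γ₁ on (γ₂, 1). -/
open Real Set

theorem schwarz_contraction_strictAnti_in_overlap (ν γ₂ : ℝ) (hν : 0 < ν)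
    (h0 : 0 < γ₂) (h1 : γ₂ < 1)
    (ρ : ℝ → ℝ)
    (hρ : ρ = fun γ₁ =>
      (exp (γ₂ / ν) - 1) * (exp (1 / ν) - exp (γ₁ / ν)) /
        ((exp (γ₁ / ν) - 1) * (exp (1 / ν) - exp (γ₂ / ν)))) :
    StrictAntiOn ρ (Ioo γ₂ 1) := by
  subst hρ
  intro a ha b hb hab
  simp only
  have key : ∀ x y : ℝ, x < y → exp (x / ν) < exp (y / ν) := fun x y h =>
    Real.exp_lt_exp.mpr ((div_lt_div_iff_of_pos_right hν).mpr h)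
  have hg1 : 1 < exp (γ₂ / ν) := by
    have := key 0 γ₂ h0
    rwa [zero_div, Real.exp_zero] at this
  have hga : exp (γ₂ / ν) < exp (a / ν) := key γ₂ a ha.1
  have hab' : exp (a / ν) < exp (b / ν) := key a b hab
  have hbE : exp (b / ν) < exp (1 / ν) := key b 1 hb.2
  have hgE : exp (γ₂ / ν) < exp (1 / ν) := by linarith
  have hA : 0 < exp (γ₂ / ν) - 1 := by linarith
  have hB : 0 < exp (1 / ν) - exp (γ₂ / ν) := by linarith
  have hda : 0 < (exp (a / ν) - 1) * (exp (1 / ν) - exp (γ₂ / ν)) := by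
    apply mul_pos <;> linarith
  have hdb : 0 < (exp (b / ν) - 1) * (exp (1 / ν) - exp (γ₂ / ν)) := by
    apply mul_pos <;> linarith
  rw [div_lt_div_iff₀ hdb hda]
  nlinarith [mul_pos hA hB, sq_nonneg (exp (a / ν) - exp (b / ν)),
    mul_pos (mul_pos hA hB) (sub_pos.mpr hab')]
end
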